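/- Let G be an (F+1)-robust graph on vertex set V and let B ⊆ V be a set of 'Byzantine' vertices such that every vertex in V has at most F in-neighbors belonging to B. Then the subgraph of G induced on the normal vertices A = V \ B is 1-robust. -/
import Mathlib


/-- A nonempty subset `Q` is `r`-reachable if some vertex in `Q` has at least `r`
in-neighbors outside `Q`. Edge `E j i` means a directed edge from `j` to `i`. -/
def rReachable {V : Type*} (E : V → V → Prop) (r : ℕ) (Q : Set V) : Prop :=
  ∃ i ∈ Q, r ≤ {j | j ∉ Q ∧ E j i}.ncard

/-- A directed graph is `r`-robust if for every pair of nonempty disjoint vertex subsets,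
at least one of them is `r`-reachable. -/
def rRobust {V : Type*} (E : V → V → Prop) (r : ℕ) : Prop :=
  ∀ Qa Qb : Set V, Qa.Nonempty → Qb.Nonempty → Disjoint Qa Qb →
    rReachable E r Qa ∨ rReachable E r Qb

lemma aux_extract {V : Type*} [Fintype V] (E : V → V → Prop) (F : ℕ) (B : Set V)
    (hF : ∀ i : V, {j | j ∈ B ∧ E j i}.ncard ≤ F)
    (Q : Set V) (i : V) (h : F + 1 ≤ {j | j ∉ Q ∧ E j i}.ncard) :
    ∃ j, j ∉ B ∧ j ∉ Q ∧ E j i := by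
  by_contra hcon
  push_neg at hcon
  have hsub : {j | j ∉ Q ∧ E j i} ⊆ {j | j ∈ B ∧ E j i} := by
    intro j hj
    rcases hj with ⟨hjQ, hjE⟩
    by_cases hjB : j ∈ B
    · exact ⟨hjB, hjE⟩
    · exact absurd hjE (hcon j hjB hjQ)
  have h1 := Set.ncard_le_ncard hsub (Set.toFinite _)
  have h2 := hF i
  omega

lemma aux_lift {V : Type*} [Fintype V] (E : V → V → Prop) (F : ℕ) (B : Set V)
    (hF : ∀ i : V, {j | j ∈ B ∧ E j i}.ncard ≤ F)
    (Q : Set ↥(Bᶜ : Set V))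
    (h : rReachable E (F + 1) (Subtype.val '' Q)) :
    rReachable (fun j i : ↥(Bᶜ : Set V) => E (j : V) (i : V)) 1 Q := by
  obtain ⟨i, hiQ, hcard⟩ := h
  obtain ⟨i₀, hi₀Q, rfl⟩ := hiQ
  obtain ⟨j, hjB, hjQ, hjE⟩ := aux_extract E F B hF _ _ hcard
  refine ⟨i₀, hi₀Q, ?_⟩
  have hne : ({j' : ↥(Bᶜ : Set V) | j' ∉ Q ∧ E (j' : V) (i₀ : V)}).Nonempty := by
    refine ⟨⟨j, hjB⟩, ?_, hjE⟩
    intro hmem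
    exact hjQ ⟨⟨j, hjB⟩, hmem, rfl⟩
  have : 0 < ({j' : ↥(Bᶜ : Set V) | j' ∉ Q ∧ E (j' : V) (i₀ : V)}).ncard :=
    (Set.ncard_pos (Set.toFinite _)).mpr hne
  exact this

theorem induced_normal_one_robust {V : Type*} [Fintype V] (E : V → V → Prop)
    (F : ℕ) (B : Set V)
    (hrob : rRobust E (F + 1))
    (hF : ∀ i : V, {j | j ∈ B ∧ E j i}.ncard ≤ F) :
    rRobust (fun j i : ↥(Bᶜ : Set V) => E (j : V) (i : V)) 1 := by
  intro Qa Qb hQa hQb hdisj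
  have hdisj' : Disjoint (Subtype.val '' Qa) (Subtype.val '' Qb) :=
    (Set.disjoint_image_iff Subtype.val_injective).mpr hdisj
  rcases hrob (Subtype.val '' Qa) (Subtype.val '' Qb) (hQa.image _) (hQb.image _) hdisj' with h | h
  · exact Or.inl (aux_lift E F B hF Qa h)
  · exact Or.inr (aux_lift E F B hF Qb h)
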